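/- Let ε = 1 or ε = -1, let b₁, b₀, c₂, c₁ : ℝ → ℝ be smooth, and let η₁, η₂ : ℝ → ℝ be smooth. Then the Lie bracket of the vector fields Y(η₁) and Y(η₂) on ℝ⁴ equals X(ξ), where ξ(t) := −(ε/2)(η₁(t) η₂'(t) − η₁'(t) η₂(t)). In particular the symmetry algebra spanned by the X(ξ) and Y(η) is non-Abelian. -/

import Mathlib

/-- Lie bracket of vector fields on `ℝ⁴`, identified with smooth maps `ℝ⁴ → ℝ⁴`:
`[V,W](p) = DW(p)(V(p)) − DV(p)(W(p))`. -/
noncomputable def VBracket (V W : ℝ × ℝ × ℝ × ℝ → ℝ × ℝ × ℝ × ℝ) :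
    ℝ × ℝ × ℝ × ℝ → ℝ × ℝ × ℝ × ℝ :=
  fun p => fderiv ℝ W p (V p) - fderiv ℝ V p (W p)

/-- The vector field `X(ξ) = ξ(t)∂x + ξ'(t)∂u` in coordinates `(x,y,t,u)`. -/
noncomputable def Xfield (ξ : ℝ → ℝ) : ℝ × ℝ × ℝ × ℝ → ℝ × ℝ × ℝ × ℝ :=
  fun p => (ξ p.2.2.1, 0, 0, deriv ξ p.2.2.1)

/-- The vector field `Y(η)` of Theorem 2 in coordinates `(x,y,t,u)`. -/
noncomputable def Yfield (ε : ℝ) (b₁ b₀ c₂ c₁ : ℝ → ℝ) (η : ℝ → ℝ) :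
    ℝ × ℝ × ℝ × ℝ → ℝ × ℝ × ℝ × ℝ :=
  fun p =>
    (ε / 2 * (b₁ p.2.2.1 * η p.2.2.1 - deriv η p.2.2.1) * p.2.1,
     η p.2.2.1,
     0,
     (-2 * c₂ p.2.2.1 * η p.2.2.1
        + ε / 2 * (deriv b₁ p.2.2.1 * η p.2.2.1 + (b₁ p.2.2.1) ^ 2 * η p.2.2.1
            - deriv (deriv η) p.2.2.1)) * p.2.1
       - c₁ p.2.2.1 * η p.2.2.1
       + ε / 2 * b₀ p.2.2.1 * (b₁ p.2.2.1 * η p.2.2.1 - deriv η p.2.2.1))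

lemma diff_of_contDiff {f : ℝ → ℝ} (hf : ContDiff ℝ (⊤ : ℕ∞) f) : Differentiable ℝ f :=
  hf.differentiable (by simp)

lemma diff_deriv {f : ℝ → ℝ} (hf : ContDiff ℝ (⊤ : ℕ∞) f) : Differentiable ℝ (deriv f) := by
  have h1 : ContDiff ℝ (⊤ : ℕ∞) (deriv f) := by
    have := hf.iterate_deriv 1; simpa using this
  exact diff_of_contDiff h1

lemma diff_deriv2 {f : ℝ → ℝ} (hf : ContDiff ℝ (⊤ : ℕ∞) f) :
    Differentiable ℝ (deriv (deriv f)) := by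
  have h2 : ContDiff ℝ (⊤ : ℕ∞) (deriv (deriv f)) := by
    have := hf.iterate_deriv 2
    simpa [Function.iterate_succ, Function.comp] using this
  exact diff_of_contDiff h2

lemma Yfield_fderiv_apply (ε : ℝ) (b₁ b₀ c₂ c₁ η : ℝ → ℝ)
    (hb₁ : ContDiff ℝ (⊤ : ℕ∞) b₁) (hb₀ : ContDiff ℝ (⊤ : ℕ∞) b₀)
    (hc₂ : ContDiff ℝ (⊤ : ℕ∞) c₂) (hc₁ : ContDiff ℝ (⊤ : ℕ∞) c₁)
    (hη : ContDiff ℝ (⊤ : ℕ∞) η)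
    (p v : ℝ × ℝ × ℝ × ℝ) (hv : v.2.2.1 = 0) :
    fderiv ℝ (Yfield ε b₁ b₀ c₂ c₁ η) p v =
      (ε / 2 * (b₁ p.2.2.1 * η p.2.2.1 - deriv η p.2.2.1) * v.2.1,
       0, 0,
       (-2 * c₂ p.2.2.1 * η p.2.2.1
          + ε / 2 * (deriv b₁ p.2.2.1 * η p.2.2.1 + (b₁ p.2.2.1) ^ 2 * η p.2.2.1
              - deriv (deriv η) p.2.2.1)) * v.2.1) := by
  set t := p.2.2.1 with ht
  set y := p.2.1 with hy
  -- projections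
  set Lt : (ℝ × ℝ × ℝ × ℝ) →L[ℝ] ℝ :=
    (ContinuousLinearMap.fst ℝ ℝ ℝ).comp
      ((ContinuousLinearMap.snd ℝ ℝ (ℝ × ℝ)).comp
        (ContinuousLinearMap.snd ℝ ℝ (ℝ × ℝ × ℝ))) with hLt
  set Ly : (ℝ × ℝ × ℝ × ℝ) →L[ℝ] ℝ :=
    (ContinuousLinearMap.fst ℝ ℝ (ℝ × ℝ)).comp
      (ContinuousLinearMap.snd ℝ ℝ (ℝ × ℝ × ℝ)) with hLy
  have hT : HasFDerivAt (fun q : ℝ × ℝ × ℝ × ℝ => q.2.2.1) Lt p :=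
    hasFDerivAt_fst.comp p (hasFDerivAt_snd.comp p hasFDerivAt_snd)
  have hYc : HasFDerivAt (fun q : ℝ × ℝ × ℝ × ℝ => q.2.1) Ly p :=
    hasFDerivAt_fst.comp p hasFDerivAt_snd
  -- scalar coefficient functions
  set A : ℝ → ℝ := fun s => ε / 2 * (b₁ s * η s - deriv η s) with hA
  set B : ℝ → ℝ := fun s => -2 * c₂ s * η s
      + ε / 2 * (deriv b₁ s * η s + (b₁ s) ^ 2 * η s - deriv (deriv η) s) with hB
  set C : ℝ → ℝ := fun s => c₁ s * η s with hC
  set D : ℝ → ℝ := fun s => ε / 2 * b₀ s * (b₁ s * η s - deriv η s) with hD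
  have hηd := diff_of_contDiff hη
  have hηd1 := diff_deriv hη
  have hηd2 := diff_deriv2 hη
  have hAd : Differentiable ℝ A :=
    (differentiable_const _).mul (((diff_of_contDiff hb₁).mul hηd).sub hηd1)
  have hBd : Differentiable ℝ B :=
    (((differentiable_const (-2)).mul (diff_of_contDiff hc₂)).mul hηd).add
      ((differentiable_const _).mul
        ((((diff_deriv hb₁).mul hηd).add
          (((diff_of_contDiff hb₁).pow 2).mul hηd)).sub hηd2))
  have hCd : Differentiable ℝ C := (diff_of_contDiff hc₁).mul hηd
  have hDd : Differentiable ℝ D :=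
    ((differentiable_const _).mul (diff_of_contDiff hb₀)).mul
      (((diff_of_contDiff hb₁).mul hηd).sub hηd1)
  have hA' : HasFDerivAt (fun q : ℝ × ℝ × ℝ × ℝ => A q.2.2.1) (deriv A t • Lt) p :=
    (hAd t).hasDerivAt.comp_hasFDerivAt (h₂ := A) p hT
  have hB' : HasFDerivAt (fun q : ℝ × ℝ × ℝ × ℝ => B q.2.2.1) (deriv B t • Lt) p :=
    (hBd t).hasDerivAt.comp_hasFDerivAt (h₂ := B) p hT
  have hC' : HasFDerivAt (fun q : ℝ × ℝ × ℝ × ℝ => C q.2.2.1) (deriv C t • Lt) p :=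
    (hCd t).hasDerivAt.comp_hasFDerivAt (h₂ := C) p hT
  have hD' : HasFDerivAt (fun q : ℝ × ℝ × ℝ × ℝ => D q.2.2.1) (deriv D t • Lt) p :=
    (hDd t).hasDerivAt.comp_hasFDerivAt (h₂ := D) p hT
  have hη' : HasFDerivAt (fun q : ℝ × ℝ × ℝ × ℝ => η q.2.2.1) (deriv η t • Lt) p :=
    (hηd t).hasDerivAt.comp_hasFDerivAt p hT
  have h1 : HasFDerivAt (fun q : ℝ × ℝ × ℝ × ℝ => A q.2.2.1 * q.2.1)
      (A t • Ly + y • (deriv A t • Lt)) p := hA'.mul hYc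
  have h4 : HasFDerivAt
      (fun q : ℝ × ℝ × ℝ × ℝ => B q.2.2.1 * q.2.1 - C q.2.2.1 + D q.2.2.1)
      ((B t • Ly + y • (deriv B t • Lt)) - deriv C t • Lt + deriv D t • Lt) p :=
    ((hB'.mul hYc).sub hC').add hD'
  have h3 : HasFDerivAt (fun _ : ℝ × ℝ × ℝ × ℝ => (0 : ℝ)) (0 : (ℝ × ℝ × ℝ × ℝ) →L[ℝ] ℝ) p := by exact hasFDerivAt_const 0 p
  have hF : HasFDerivAt (Yfield ε b₁ b₀ c₂ c₁ η)
      ((A t • Ly + y • (deriv A t • Lt)).prod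
        ((deriv η t • Lt).prod
          ((0 : (ℝ × ℝ × ℝ × ℝ) →L[ℝ] ℝ).prod
            ((B t • Ly + y • (deriv B t • Lt)) - deriv C t • Lt + deriv D t • Lt)))) p :=
    HasFDerivAt.prodMk h1 (HasFDerivAt.prodMk hη' (HasFDerivAt.prodMk h3 h4))
  rw [hF.fderiv]
  have hvt : Lt v = 0 := hv
  have hvy : Ly v = v.2.1 := rfl
  simp [ContinuousLinearMap.prod_apply, hvt, hvy]
  refine ⟨Or.inl rfl, Or.inl ?_⟩
  simp only [hB]
  ring

theorem stmt2 (ε : ℝ) (hε : ε = 1 ∨ ε = -1)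
    (b₁ b₀ c₂ c₁ : ℝ → ℝ)
    (hb₁ : ContDiff ℝ (⊤ : ℕ∞) b₁) (hb₀ : ContDiff ℝ (⊤ : ℕ∞) b₀)
    (hc₂ : ContDiff ℝ (⊤ : ℕ∞) c₂) (hc₁ : ContDiff ℝ (⊤ : ℕ∞) c₁)
    (η₁ η₂ : ℝ → ℝ)
    (hη₁ : ContDiff ℝ (⊤ : ℕ∞) η₁) (hη₂ : ContDiff ℝ (⊤ : ℕ∞) η₂) :
    VBracket (Yfield ε b₁ b₀ c₂ c₁ η₁) (Yfield ε b₁ b₀ c₂ c₁ η₂)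
      = Xfield (fun t => -(ε / 2) * (η₁ t * deriv η₂ t - deriv η₁ t * η₂ t)) := by
  funext p
  have h21 := Yfield_fderiv_apply ε b₁ b₀ c₂ c₁ η₂ hb₁ hb₀ hc₂ hc₁ hη₂ p
    (Yfield ε b₁ b₀ c₂ c₁ η₁ p) rfl
  have h12 := Yfield_fderiv_apply ε b₁ b₀ c₂ c₁ η₁ hb₁ hb₀ hc₂ hc₁ hη₁ p
    (Yfield ε b₁ b₀ c₂ c₁ η₂ p) rfl
  have hv1 : (Yfield ε b₁ b₀ c₂ c₁ η₁ p).2.1 = η₁ p.2.2.1 := rfl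
  have hv2 : (Yfield ε b₁ b₀ c₂ c₁ η₂ p).2.1 = η₂ p.2.2.1 := rfl
  rw [hv1] at h21
  rw [hv2] at h12
  set t := p.2.2.1 with ht
  have hη₁d := diff_of_contDiff hη₁
  have hη₂d := diff_of_contDiff hη₂
  have hη₁d1 := diff_deriv hη₁
  have hη₂d1 := diff_deriv hη₂
  have hdξ : deriv (fun s => -(ε / 2) * (η₁ s * deriv η₂ s - deriv η₁ s * η₂ s)) t
      = -(ε / 2) * ((deriv η₁ t * deriv η₂ t + η₁ t * deriv (deriv η₂) t)
          - (deriv (deriv η₁) t * η₂ t + deriv η₁ t * deriv η₂ t)) := by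
    have h : HasDerivAt (fun s => η₁ s * deriv η₂ s - deriv η₁ s * η₂ s)
        ((deriv η₁ t * deriv η₂ t + η₁ t * deriv (deriv η₂) t)
          - (deriv (deriv η₁) t * η₂ t + deriv η₁ t * deriv η₂ t)) t :=
      ((hη₁d t).hasDerivAt.mul (hη₂d1 t).hasDerivAt).sub
        ((hη₁d1 t).hasDerivAt.mul (hη₂d t).hasDerivAt)
    exact (h.const_mul (-(ε / 2))).deriv
  unfold VBracket Xfield
  rw [h21, h12]
  rw [hdξ]
  simp only [hdξ, Prod.mk_sub_mk]
  refine Prod.ext ?_ (Prod.ext ?_ (Prod.ext ?_ ?_))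
  · simp; ring
  · simp
  · simp
  · simp; ring
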